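/- arXiv:0906.2825 — 4 statements merged into one kernel-verified Lean document; each statement's English description precedes it below -/
import Mathlib

section
/- Let H be Hermitian, R positive semidefinite Hermitian, Q = I - R, and A(z) = I + z H + z² Q. If z₀ lies on the unit circle and u satisfies A(z₀) u = 0, then u also satisfies A(conj z₀) u = 0. -/
open Matrix ComplexOrder

theorem stmt_3 {n : ℕ}
    (H R : Matrix (Fin n) (Fin n) ℂ)
    (hH : H.IsHermitian) (hR : R.PosSemidef)
    (z₀ : ℂ) (hz : ‖z₀‖ = 1)
    (u : Fin n → ℂ)
    (heq : (1 + z₀ • H + z₀ ^ 2 • (1 - R)).mulVec u = 0) :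
    (1 + (starRingEnd ℂ z₀) • H + (starRingEnd ℂ z₀) ^ 2 • (1 - R)).mulVec u = 0 := by
  set z := z₀
  set w := (starRingEnd ℂ) z₀ with hw
  have hzw : z * w = 1 := by
    rw [hw, Complex.mul_conj]
    norm_cast
    simp [Complex.normSq_eq_norm_sq, hz]
  set A : Matrix (Fin n) (Fin n) ℂ := 1 + z • H + z ^ 2 • (1 - R) with hA
  set B : Matrix (Fin n) (Fin n) ℂ := 1 + w • H + w ^ 2 • (1 - R) with hB
  -- B = Aᴴ
  have hBA : B = Aᴴ := by
    rw [hA, hB]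
    simp only [conjTranspose_add, conjTranspose_smul, conjTranspose_one,
      conjTranspose_sub, hH.eq, hR.isHermitian.eq]
    have hsz : star z = w := rfl
    rw [star_pow, hsz]
  -- key identity: z^2 • B = A + (z^2 - 1) • R
  have hkey : z ^ 2 • B = A + (z ^ 2 - 1) • R := by
    rw [hA, hB]
    have h1 : z ^ 2 * w = z := by
      calc z ^ 2 * w = z * (z * w) := by ring
      _ = z := by rw [hzw, mul_one]
    have h2 : z ^ 2 * w ^ 2 = 1 := by
      calc z ^ 2 * w ^ 2 = (z * w) ^ 2 := by ring
      _ = 1 := by rw [hzw]; ring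
    rw [smul_add, smul_add, smul_smul, smul_smul, h1, h2, one_smul]
    module
  have hz2Bu : z ^ 2 • B.mulVec u = (z ^ 2 - 1) • R.mulVec u := by
    rw [← smul_mulVec, hkey, add_mulVec, heq, smul_mulVec]
    simp [hA]
  -- quadratic form with B vanishes
  have hquadB : star u ⬝ᵥ B.mulVec u = 0 := by
    rw [hBA, dotProduct_mulVec, vecMul_conjTranspose, star_star, heq]
    simp
  by_cases hcase : z ^ 2 = 1
  · -- then w = z, B = A
    have hwz : w = z := by
      calc w = z ^ 2 * w := by rw [hcase, one_mul]
        _ = z * (z * w) := by ring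
        _ = z := by rw [hzw, mul_one]
    have hBA2 : B = A := by rw [hB, hA, hwz]
    rw [hBA2]
    exact heq
  · -- R u = 0
    have hRquad : star u ⬝ᵥ R.mulVec u = 0 := by
      have h1 : (z ^ 2 - 1) * (star u ⬝ᵥ R.mulVec u) = 0 := by
        calc (z ^ 2 - 1) * (star u ⬝ᵥ R.mulVec u)
            = star u ⬝ᵥ ((z ^ 2 - 1) • R.mulVec u) := by
              rw [dotProduct_smul]; rfl
          _ = star u ⬝ᵥ (z ^ 2 • B.mulVec u) := by rw [hz2Bu]
          _ = z ^ 2 * (star u ⬝ᵥ B.mulVec u) := by rw [dotProduct_smul]; rfl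
          _ = 0 := by rw [hquadB, mul_zero]
      rcases mul_eq_zero.mp h1 with h | h
      · exact absurd (sub_eq_zero.mp h) hcase
      · exact h
    have hRu : R.mulVec u = 0 := (hR.dotProduct_mulVec_zero_iff u).mp hRquad
    have : z ^ 2 • B.mulVec u = 0 := by rw [hz2Bu, hRu, smul_zero]
    have hz0 : z ≠ 0 := by
      intro h
      rw [h] at hz
      simp at hz
    have := smul_eq_zero.mp this
    rcases this with h | h
    · exact absurd h (pow_ne_zero _ hz0)
    · exact h
end

section
/- Let H be Hermitian, R positive semidefinite, Q = I - R, and suppose u ≠ 0 with (I + z₀ H + z₀² Q) u = 0 for some z₀ on the unit circle with z₀ ≠ ±1 (i.e., z₀ not real). Then u is an eigenvector of H with eigenvalue -(z₀ + 1/z₀), and this eigenvalue is real with absolute value at most 2. -/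
open Matrix ComplexOrder

theorem stmt_4 {n : ℕ}
    (H R : Matrix (Fin n) (Fin n) ℂ)
    (hH : H.IsHermitian) (hR : R.PosSemidef)
    (z₀ : ℂ) (hz : ‖z₀‖ = 1) (hz1 : z₀ ≠ 1) (hz2 : z₀ ≠ -1)
    (u : Fin n → ℂ) (hu : u ≠ 0)
    (heq : (1 + z₀ • H + z₀ ^ 2 • (1 - R)).mulVec u = 0) :
    H.mulVec u = (-(z₀ + z₀⁻¹)) • u ∧
    (-(z₀ + z₀⁻¹)).im = 0 ∧ ‖(-(z₀ + z₀⁻¹))‖ ≤ 2 := by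
  have hz0 : z₀ ≠ 0 := by
    intro h; rw [h] at hz; simp at hz
  have hconj : z₀⁻¹ = starRingEnd ℂ z₀ := by
    rw [Complex.inv_def, Complex.normSq_eq_norm_sq, hz]
    simp
  have hre : z₀ + z₀⁻¹ = (2 * z₀.re : ℝ) := by
    rw [hconj]
    simp [Complex.ext_iff, two_mul]
  have him : z₀.im ≠ 0 := by
    intro h
    have habs : z₀.re * z₀.re = 1 := by
      have := hz
      rw [Complex.norm_def, Complex.normSq_apply, h] at this
      simpa [abs_eq_abs, ← Real.sqrt_sq_eq_abs] using this
    rcases mul_self_eq_one_iff.mp habs with h1 | h1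
    · exact hz1 (Complex.ext (by simp [h1]) (by simp [h]))
    · exact hz2 (Complex.ext (by simp [h1]) (by simp [h]))
  -- expand heq
  have key : z₀ • H.mulVec u = z₀ • (z₀ • R.mulVec u + (-(z₀ + z₀⁻¹)) • u) := by
    have h1 : u + z₀ • H.mulVec u + z₀ ^ 2 • (u - R.mulVec u) = 0 := by
      simpa [add_mulVec, smul_mulVec, sub_mulVec, one_mulVec] using heq
    have : z₀ • (z₀ • R.mulVec u + (-(z₀ + z₀⁻¹)) • u)
        = z₀ ^ 2 • R.mulVec u - z₀ ^ 2 • u - u := by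
      rw [smul_add, smul_smul, smul_smul]
      rw [mul_neg, mul_add, mul_inv_cancel₀ hz0]
      rw [neg_smul, add_smul, one_smul, mul_comm z₀ z₀]
      rw [← pow_two]
      abel
    rw [this]
    have := h1
    rw [smul_sub] at this
    have h2 : z₀ • H.mulVec u = -(u + z₀ ^ 2 • u - z₀ ^ 2 • R.mulVec u) := by
      rw [eq_neg_iff_add_eq_zero]
      rw [← this]; abel
    rw [h2]; abel
  have key2 : H.mulVec u = z₀ • R.mulVec u + (-(z₀ + z₀⁻¹)) • u :=
    smul_right_injective _ hz0 key
  -- dot products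
  set a := star u ⬝ᵥ H.mulVec u with ha
  set r := star u ⬝ᵥ R.mulVec u with hr
  set s := star u ⬝ᵥ u with hs
  have haR : a.im = 0 := by
    have h1 : star a = a := by
      rw [ha, ← star_dotProduct_star, star_star, star_mulVec, ← dotProduct_mulVec, hH.eq]
    rw [Complex.ext_iff] at h1
    have := h1.2
    simp only [Complex.star_def, Complex.conj_im] at this
    linarith
  have hrR : r.im = 0 := by
    have := hR.dotProduct_mulVec_nonneg u
    rw [Complex.le_def] at this
    exact this.2.symm
  have hsR : s.im = 0 := by
    have : star s = s := by rw [hs, ← star_dotProduct_star, star_star]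
    rw [Complex.ext_iff] at this
    have := this.2
    simp only [Complex.star_def, Complex.conj_im] at this
    linarith
  have hdot : a = z₀ * r + (-(z₀ + z₀⁻¹)) * s := by
    rw [ha, key2, dotProduct_add, dotProduct_smul, dotProduct_smul, smul_eq_mul, smul_eq_mul]
  have hcR : (-(z₀ + z₀⁻¹)).im = 0 := by rw [hre]; simp
  have hr0 : r = 0 := by
    have h := congrArg Complex.im hdot
    simp only [Complex.add_im, Complex.mul_im, hcR, hsR, hrR, haR, mul_zero, zero_mul,
      add_zero, zero_add] at h
    have hre0 : r.re = 0 := by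
      rcases mul_eq_zero.mp h.symm with h' | h'
      · exact absurd h' him
      · exact h'
    exact Complex.ext hre0 hrR
  have hRu : R.mulVec u = 0 := (hR.dotProduct_mulVec_zero_iff u).mp hr0
  refine ⟨?_, hcR, ?_⟩
  · rw [key2, hRu, smul_zero, zero_add]
  · rw [hre]
    have : ‖(-(2 * z₀.re : ℝ) : ℂ)‖ = |2 * z₀.re| := by
      rw [norm_neg, Complex.norm_real, Real.norm_eq_abs]
    rw [this, abs_mul, abs_two]
    have : |z₀.re| ≤ 1 := by
      rw [← hz]; exact Complex.abs_re_le_norm z₀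
    linarith
end

section
/- Block form of cutting k tails: let S = [[T,U],[V,W]] be a unitary (m+k)×(m+k) matrix with |z| = 1 and I + z²W invertible. Then S^c = T - z² U (I + z² W)⁻¹ V is unitary. -/
open Matrix ComplexOrder

lemma cut_aux {m k : ℕ}
    (T : Matrix (Fin m) (Fin m) ℂ) (U : Matrix (Fin m) (Fin k) ℂ)
    (V : Matrix (Fin k) (Fin m) ℂ) (W : Matrix (Fin k) (Fin k) ℂ)
    (h1 : T * Tᴴ + U * Uᴴ = 1) (h2 : T * Vᴴ + U * Wᴴ = 0)
    (h3 : V * Tᴴ + W * Uᴴ = 0) (h4 : V * Vᴴ + W * Wᴴ = 1)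
    (c : ℂ) (hc : c * star c = 1)
    (hB : IsUnit (1 + c • W)) :
    (T - c • (U * (1 + c • W)⁻¹ * V)) *
      (T - c • (U * (1 + c • W)⁻¹ * V))ᴴ = 1 := by
  set B : Matrix (Fin k) (Fin k) ℂ := 1 + c • W with hBdef
  have hc' : star c * c = 1 := by rw [mul_comm] at hc; exact hc
  have hBd : IsUnit B.det := (Matrix.isUnit_iff_isUnit_det B).mp hB
  have hBHd : IsUnit (Bᴴ).det := (Matrix.isUnit_iff_isUnit_det _).mp
    ((Matrix.isUnit_conjTranspose (A := B)).mpr hB)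
  have hB1 : B * B⁻¹ = 1 := Matrix.mul_nonsing_inv B hBd
  have hB2 : B⁻¹ * B = 1 := Matrix.nonsing_inv_mul B hBd
  have hBH1 : Bᴴ * Bᴴ⁻¹ = 1 := Matrix.mul_nonsing_inv _ hBHd
  have hBH2 : Bᴴ⁻¹ * Bᴴ = 1 := Matrix.nonsing_inv_mul _ hBHd
  -- key identity
  have hK : c • (W * Bᴴ) + star c • (B * Wᴴ) + (1 - W * Wᴴ) = B * Bᴴ := by
    rw [hBdef]
    simp only [conjTranspose_add, conjTranspose_smul, conjTranspose_one,
      Matrix.mul_add, Matrix.add_mul, Matrix.mul_smul, Matrix.smul_mul,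
      Matrix.mul_one, Matrix.one_mul, smul_smul, starRingEnd_apply]
    match_scalars <;> first | ring1 | linear_combination hc | linear_combination -hc
  have e1 : B⁻¹ * (W * Bᴴ) * Bᴴ⁻¹ = B⁻¹ * W := by
    rw [Matrix.mul_assoc, Matrix.mul_assoc, hBH1, Matrix.mul_one]
  have e2 : B⁻¹ * (B * Wᴴ) * Bᴴ⁻¹ = Wᴴ * Bᴴ⁻¹ := by
    rw [← Matrix.mul_assoc B⁻¹ B Wᴴ, hB2, Matrix.one_mul]
  have e3 : B⁻¹ * (B * Bᴴ) * Bᴴ⁻¹ = 1 := by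
    rw [← Matrix.mul_assoc B⁻¹ B Bᴴ, hB2, Matrix.one_mul, hBH1]
  have hE : c • (B⁻¹ * W) + star c • (Wᴴ * Bᴴ⁻¹) + B⁻¹ * (1 - W * Wᴴ) * Bᴴ⁻¹ = 1 := by
    have key := congrArg (fun M => B⁻¹ * M * Bᴴ⁻¹) hK
    simp only [Matrix.mul_add, Matrix.add_mul, Matrix.mul_smul, Matrix.smul_mul] at key
    rw [e1, e2, e3] at key
    exact key
  have h1' : T * Tᴴ = 1 - U * Uᴴ := eq_sub_of_add_eq h1
  have h2' : ∀ X : Matrix (Fin k) (Fin m) ℂ, T * (Vᴴ * X) = -(U * (Wᴴ * X)) := by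
    intro X
    rw [← Matrix.mul_assoc, ← Matrix.mul_assoc, eq_neg_of_add_eq_zero_left h2,
      Matrix.neg_mul]
  have h3' : V * Tᴴ = -(W * Uᴴ) := eq_neg_of_add_eq_zero_left h3
  have h4' : ∀ X : Matrix (Fin k) (Fin m) ℂ, V * (Vᴴ * X) = X - W * (Wᴴ * X) := by
    intro X
    rw [← Matrix.mul_assoc, ← Matrix.mul_assoc, eq_sub_of_add_eq h4,
      Matrix.sub_mul, Matrix.one_mul]
  have key := congrArg (fun M => U * M * Uᴴ) hE
  simp only [Matrix.mul_add, Matrix.add_mul, Matrix.mul_smul, Matrix.smul_mul,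
    Matrix.mul_one, Matrix.one_mul, Matrix.mul_assoc, Matrix.sub_mul,
    Matrix.mul_sub] at key
  simp only [conjTranspose_sub, conjTranspose_smul, conjTranspose_mul,
    Matrix.conjTranspose_nonsing_inv, Matrix.sub_mul, Matrix.mul_sub,
    Matrix.mul_smul, Matrix.smul_mul, smul_smul, Matrix.mul_assoc,
    starRingEnd_apply, hc, one_smul]
  rw [h1', h3', h2' (Bᴴ⁻¹ * Uᴴ), h4' (Bᴴ⁻¹ * Uᴴ)]
  rw [← key]
  simp only [Matrix.mul_sub, Matrix.mul_neg, smul_neg, Matrix.mul_one]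
  match_scalars <;> first | ring1 | linear_combination hc | linear_combination -hc | linear_combination hc' | linear_combination -hc'

theorem stmt_13 {m k : ℕ}
    (T : Matrix (Fin m) (Fin m) ℂ) (U : Matrix (Fin m) (Fin k) ℂ)
    (V : Matrix (Fin k) (Fin m) ℂ) (W : Matrix (Fin k) (Fin k) ℂ)
    (hS1 : Matrix.fromBlocks T U V W * (Matrix.fromBlocks T U V W)ᴴ = 1)
    (hS2 : (Matrix.fromBlocks T U V W)ᴴ * Matrix.fromBlocks T U V W = 1)
    (z : ℂ) (hz : ‖z‖ = 1)
    (hW : IsUnit (1 + z ^ 2 • W)) :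
    (T - z ^ 2 • (U * (1 + z ^ 2 • W)⁻¹ * V)) *
      (T - z ^ 2 • (U * (1 + z ^ 2 • W)⁻¹ * V))ᴴ = 1 ∧
    (T - z ^ 2 • (U * (1 + z ^ 2 • W)⁻¹ * V))ᴴ *
      (T - z ^ 2 • (U * (1 + z ^ 2 • W)⁻¹ * V)) = 1 := by
  have hz1 : z * star z = 1 := by
    have := Complex.mul_conj z
    rw [Complex.normSq_eq_norm_sq] at this
    simp only [RCLike.star_def]
    rw [this]
    norm_cast
    rw [hz]; norm_num
  have hc : z ^ 2 * star (z ^ 2) = 1 := by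
    rw [star_pow, ← mul_pow, hz1, one_pow]
  have hcc : star (z ^ 2) * star (star (z ^ 2)) = 1 := by
    rw [star_star, mul_comm]; exact hc
  have hb1 := hS1
  rw [Matrix.fromBlocks_conjTranspose, Matrix.fromBlocks_multiply,
    ← Matrix.fromBlocks_one] at hb1
  obtain ⟨h1, h2, h3, h4⟩ := Matrix.fromBlocks_inj.mp hb1
  have hb2 := hS2
  rw [Matrix.fromBlocks_conjTranspose, Matrix.fromBlocks_multiply,
    ← Matrix.fromBlocks_one] at hb2
  obtain ⟨a1, a2, a3, a4⟩ := Matrix.fromBlocks_inj.mp hb2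
  refine ⟨cut_aux T U V W h1 h2 h3 h4 (z ^ 2) hc hW, ?_⟩
  have a1' : Tᴴ * (Tᴴ)ᴴ + Vᴴ * (Vᴴ)ᴴ = 1 := by
    simpa using a1
  have a2' : Tᴴ * (Uᴴ)ᴴ + Vᴴ * (Wᴴ)ᴴ = 0 := by simpa using a2
  have a3' : Uᴴ * (Tᴴ)ᴴ + Wᴴ * (Vᴴ)ᴴ = 0 := by simpa using a3
  have a4' : Uᴴ * (Uᴴ)ᴴ + Wᴴ * (Wᴴ)ᴴ = 1 := by simpa using a4
  have hBeq : (1 + star (z ^ 2) • Wᴴ) = (1 + z ^ 2 • W)ᴴ := by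
    rw [conjTranspose_add, conjTranspose_smul, conjTranspose_one]
  have hB' : IsUnit (1 + star (z ^ 2) • Wᴴ) := by
    rw [hBeq]
    exact (Matrix.isUnit_conjTranspose (A := 1 + z ^ 2 • W)).mpr hW
  have h2goal := cut_aux Tᴴ Vᴴ Uᴴ Wᴴ a1' a2' a3' a4' (star (z ^ 2)) hcc hB'
  rw [hBeq, ← Matrix.conjTranspose_nonsing_inv] at h2goal
  have hXH : Tᴴ - star (z ^ 2) • (Vᴴ * ((1 + z ^ 2 • W)⁻¹)ᴴ * Uᴴ)
      = (T - z ^ 2 • (U * (1 + z ^ 2 • W)⁻¹ * V))ᴴ := by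
    rw [conjTranspose_sub, conjTranspose_smul, conjTranspose_mul, conjTranspose_mul,
      Matrix.mul_assoc]
  rw [hXH, conjTranspose_conjTranspose] at h2goal
  exact h2goal
end

section
/- Connecting two tails preserves unitarity: let S = [[T,U],[V,W]] be a unitary (n+2)×(n+2) matrix, |z| = 1, X the 2×2 Pauli X matrix, and assume zW - X is invertible. Then S̃ = T - z U (zW - X)⁻¹ V is unitary. -/
open Matrix ComplexOrder

private lemma key {k l : Type*} [Fintype k] [Fintype l] [DecidableEq k] [DecidableEq l]
    (T : Matrix k k ℂ) (U : Matrix k l ℂ) (V : Matrix l k ℂ) (W K G : Matrix l l ℂ)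
    (h1 : T * Tᴴ + U * Uᴴ = 1) (h2 : T * Vᴴ + U * Wᴴ = 0) (h3 : V * Tᴴ + W * Uᴴ = 0)
    (h4 : V * Vᴴ + W * Wᴴ = 1)
    (hKW : K * W = 1 + K * G) (hGG : G * Gᴴ = 1) :
    (T - U * K * V) * (T - U * K * V)ᴴ = 1 := by
  have hTV : T * Vᴴ = -(U * Wᴴ) := eq_neg_of_add_eq_zero_left h2
  have hVT : V * Tᴴ = -(W * Uᴴ) := eq_neg_of_add_eq_zero_left h3
  have hVV : V * Vᴴ = 1 - W * Wᴴ := eq_sub_of_add_eq h4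
  have hWK : Wᴴ * Kᴴ = 1 + Gᴴ * Kᴴ := by
    have := congrArg conjTranspose hKW
    simpa [conjTranspose_mul, conjTranspose_add] using this
  have hmid : (1 + Gᴴ * Kᴴ) + (1 + K * G) + K * Kᴴ - (1 + K * G) * (1 + Gᴴ * Kᴴ) = 1 := by
    have hx : K * G * (Gᴴ * Kᴴ) = K * Kᴴ := by
      rw [Matrix.mul_assoc K G, ← Matrix.mul_assoc G, hGG, Matrix.one_mul]
    have hexp : (1 + K * G) * (1 + Gᴴ * Kᴴ) = 1 + Gᴴ * Kᴴ + K * G + K * G * (Gᴴ * Kᴴ) := by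
      noncomm_ring
    rw [hexp, hx]; abel
  calc (T - U * K * V) * (T - U * K * V)ᴴ
      = T * Tᴴ - (T * Vᴴ) * (Kᴴ * Uᴴ) - U * K * (V * Tᴴ) + U * (K * (V * Vᴴ) * Kᴴ) * Uᴴ := by
        rw [conjTranspose_sub, conjTranspose_mul, conjTranspose_mul]
        simp only [Matrix.sub_mul, Matrix.mul_sub, Matrix.mul_assoc]
        abel
    _ = T * Tᴴ + U * ((Wᴴ * Kᴴ) + (K * W) + K * Kᴴ - K * W * (Wᴴ * Kᴴ)) * Uᴴ := by
        rw [hTV, hVT, hVV]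
        simp only [Matrix.mul_add, Matrix.add_mul, Matrix.mul_sub, Matrix.sub_mul,
          Matrix.mul_neg, Matrix.neg_mul, Matrix.mul_one, Matrix.one_mul, Matrix.mul_assoc]
        abel
    _ = T * Tᴴ + U * Uᴴ := by
        rw [hWK, hKW, hmid, Matrix.mul_one]
    _ = 1 := h1

theorem stmt_14 {n : ℕ}
    (T : Matrix (Fin n) (Fin n) ℂ) (U : Matrix (Fin n) (Fin 2) ℂ)
    (V : Matrix (Fin 2) (Fin n) ℂ) (W : Matrix (Fin 2) (Fin 2) ℂ)
    (hS1 : Matrix.fromBlocks T U V W * (Matrix.fromBlocks T U V W)ᴴ = 1)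
    (hS2 : (Matrix.fromBlocks T U V W)ᴴ * Matrix.fromBlocks T U V W = 1)
    (z : ℂ) (hz : ‖z‖ = 1)
    (hWX : IsUnit (z • W - !![0, 1; 1, 0])) :
    (T - z • (U * (z • W - !![0, 1; 1, 0])⁻¹ * V)) *
      (T - z • (U * (z • W - !![0, 1; 1, 0])⁻¹ * V))ᴴ = 1 ∧
    (T - z • (U * (z • W - !![0, 1; 1, 0])⁻¹ * V))ᴴ *
      (T - z • (U * (z • W - !![0, 1; 1, 0])⁻¹ * V)) = 1 := by
  set X : Matrix (Fin 2) (Fin 2) ℂ := !![0, 1; 1, 0] with hX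
  set A : Matrix (Fin 2) (Fin 2) ℂ := z • W - X with hA
  -- scalar facts
  have habs : ‖z‖ = 1 := by rw [hz]
  have hzz : star z * z = 1 := by
    simp [Complex.star_def, Complex.conj_mul', Complex.normSq_eq_norm_sq, habs]
  have hzz' : z * star z = 1 := by rw [mul_comm]; exact hzz
  -- inverse facts
  have hdet : IsUnit A.det := (Matrix.isUnit_iff_isUnit_det A).mp hWX
  have hA1 : A * A⁻¹ = 1 := Matrix.mul_nonsing_inv A hdet
  have hA2 : A⁻¹ * A = 1 := Matrix.nonsing_inv_mul A hdet
  set K : Matrix (Fin 2) (Fin 2) ℂ := z • A⁻¹ with hK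
  set G : Matrix (Fin 2) (Fin 2) ℂ := (star z) • X with hG
  have hXX : X * X = 1 := by
    rw [hX]
    norm_num [Matrix.mul_fin_two, ← Matrix.one_fin_two]
  have hXH : Xᴴ = X := by
    rw [hX]; ext i j; fin_cases i <;> fin_cases j <;> simp
  have hGH : Gᴴ = z • X := by
    rw [hG, Matrix.conjTranspose_smul, hXH]; simp
  have hGG : G * Gᴴ = 1 := by
    rw [hGH, hG, Matrix.smul_mul, Matrix.mul_smul, smul_smul, hzz, hXX, one_smul]
  have hGG' : Gᴴ * G = 1 := by
    rw [hGH, hG, Matrix.smul_mul, Matrix.mul_smul, smul_smul, hzz', hXX, one_smul]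
  have hzWAX : z • W = A + X := by rw [hA]; abel
  have hKG : K * G = A⁻¹ * X := by
    rw [hK, hG, Matrix.smul_mul, Matrix.mul_smul, smul_smul, hzz', one_smul]
  have hGK : G * K = X * A⁻¹ := by
    rw [hK, hG, Matrix.smul_mul, Matrix.mul_smul, smul_smul, hzz, one_smul]
  have hKW : K * W = 1 + K * G := by
    rw [hKG]
    calc K * W = A⁻¹ * (z • W) := by rw [hK, Matrix.smul_mul, Matrix.mul_smul]
      _ = A⁻¹ * A + A⁻¹ * X := by rw [hzWAX, Matrix.mul_add]
      _ = 1 + A⁻¹ * X := by rw [hA2]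
  have hWKmul : W * K = 1 + G * K := by
    rw [hGK]
    calc W * K = (z • W) * A⁻¹ := by rw [hK, Matrix.smul_mul, Matrix.mul_smul]
      _ = A * A⁻¹ + X * A⁻¹ := by rw [hzWAX, Matrix.add_mul]
      _ = 1 + X * A⁻¹ := by rw [hA1]
  have hKW' : Kᴴ * Wᴴ = 1 + Kᴴ * Gᴴ := by
    have := congrArg conjTranspose hWKmul
    simpa [conjTranspose_mul, conjTranspose_add] using this
  -- block equations
  have hb := hS1
  rw [Matrix.fromBlocks_conjTranspose, Matrix.fromBlocks_multiply, ← Matrix.fromBlocks_one] at hb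
  have h1 : T * Tᴴ + U * Uᴴ = 1 := congrArg Matrix.toBlocks₁₁ hb
  have h2 : T * Vᴴ + U * Wᴴ = 0 := congrArg Matrix.toBlocks₁₂ hb
  have h3 : V * Tᴴ + W * Uᴴ = 0 := congrArg Matrix.toBlocks₂₁ hb
  have h4 : V * Vᴴ + W * Wᴴ = 1 := congrArg Matrix.toBlocks₂₂ hb
  have hc := hS2
  rw [Matrix.fromBlocks_conjTranspose, Matrix.fromBlocks_multiply, ← Matrix.fromBlocks_one] at hc
  have g1 : Tᴴ * T + Vᴴ * V = 1 := congrArg Matrix.toBlocks₁₁ hc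
  have g2 : Tᴴ * U + Vᴴ * W = 0 := congrArg Matrix.toBlocks₁₂ hc
  have g3 : Uᴴ * T + Wᴴ * V = 0 := congrArg Matrix.toBlocks₂₁ hc
  have g4 : Uᴴ * U + Wᴴ * W = 1 := congrArg Matrix.toBlocks₂₂ hc
  have hE : T - z • (U * A⁻¹ * V) = T - U * K * V := by
    rw [hK, Matrix.mul_smul, Matrix.smul_mul]
  rw [hE]
  constructor
  · exact key T U V W K G h1 h2 h3 h4 hKW hGG
  · have := key Tᴴ Vᴴ Uᴴ Wᴴ Kᴴ Gᴴ
      (by simpa using g1) (by simpa using g2) (by simpa using g3) (by simpa using g4)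
      hKW' (by simpa using hGG')
    have hEH : Tᴴ - Vᴴ * Kᴴ * Uᴴ = (T - U * K * V)ᴴ := by
      simp [conjTranspose_sub, conjTranspose_mul, Matrix.mul_assoc]
    rw [hEH] at this
    simpa using this
end
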